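/- arXiv:1409.7162 — 3 statements merged into one kernel-verified Lean document; each statement's English description precedes it below -/
import Mathlib

section
/- For every p ∈ ℕ, the mean of the p-th powers of the zeros w₁, …, w_{n−1} of Q satisfies: (1/(n−1)) ∑_{i=1}^{n−1} wᵢᵖ = (n/(n−1))·(1/n) ∑_{j=1}^n z_jᵖ − (p/(n−1)) ∑_{j=1}^n α_j z_jᵖ + (1/(n−1)) ∑′ (−1)ˢ [∏_{t=1}^{s−1} (∑_{j=1}^n α_j z_j^{h_t})] · (∑_{j=1}^n α_j z_j^{q+r}), where ∑′ denotes the sum over all q ∈ {1, …, p−1}, r ∈ {0, …, p−q−1}, s ∈ {2, …, p−q−r+1} and all (h₁, …, h_{s−1}) ∈ ℕ^{s−1} with h₁ + ⋯ + h_{s−1} = p − q − r. -/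
open Finset Polynomial

namespace Statement8Aux

noncomputable section


variable (A : ℕ → ℂ)

/-- Sum over positive `s`-tuples summing to `k` of products of `A`. -/
def T (s k : ℕ) : ℂ :=
  ∑ h ∈ (Finset.Nat.antidiagonalTuple s k).filter (fun h => ∀ t, 1 ≤ h t),
    ∏ t, A (h t)

def e (k : ℕ) : ℂ := ∑ s ∈ Finset.range (k + 1), (-1) ^ s * T A s k

theorem T_zero_zero : T A 0 0 = 1 := by
  simp [T, Finset.Nat.antidiagonalTuple_zero_zero]

theorem T_zero_pos {k : ℕ} (hk : 1 ≤ k) : T A 0 k = 0 := by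
  obtain ⟨k, rfl⟩ := Nat.exists_eq_succ_of_ne_zero (by omega : k ≠ 0)
  simp [T, Finset.Nat.antidiagonalTuple_zero_succ]

theorem T_eq_zero_of_lt {s k : ℕ} (h : k < s) : T A s k = 0 := by
  apply Finset.sum_eq_zero
  intro x hx
  rw [Finset.mem_filter, Finset.Nat.mem_antidiagonalTuple] at hx
  exfalso
  have : s ≤ k := by
    calc s = ∑ _t : Fin s, 1 := by simp
    _ ≤ ∑ t, x t := Finset.sum_le_sum fun t _ => hx.2 t
    _ = k := hx.1
  omega

theorem T_succ (s k : ℕ) : T A (s + 1) k = ∑ j ∈ Icc 1 k, A j * T A s (k - j) := by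
  rw [T]
  have : ∀ j ∈ Icc 1 k, A j * T A s (k - j)
      = ∑ g ∈ (Finset.Nat.antidiagonalTuple s (k - j)).filter (fun h => ∀ t, 1 ≤ h t),
          A j * ∏ t, A (g t) := by
    intro j _; rw [T, Finset.mul_sum]
  rw [Finset.sum_congr rfl this, Finset.sum_sigma']
  apply Finset.sum_nbij' (i := fun h => ⟨h 0, Fin.tail h⟩)
    (j := fun x => Fin.cons x.1 x.2)
  · intro h hh
    rw [Finset.mem_filter, Finset.Nat.mem_antidiagonalTuple] at hh
    rw [Fin.sum_univ_succ] at hh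
    have h0le : h 0 ≤ k := by have := hh.1; omega
    refine Finset.mem_sigma.2 ⟨Finset.mem_Icc.2 ⟨hh.2 0, h0le⟩, ?_⟩
    rw [Finset.mem_filter, Finset.Nat.mem_antidiagonalTuple]
    refine ⟨?_, fun t => hh.2 t.succ⟩
    show ∑ t : Fin s, h t.succ = k - h 0
    have := hh.1
    omega
  · intro x hx
    rw [Finset.mem_sigma, Finset.mem_Icc, Finset.mem_filter,
      Finset.Nat.mem_antidiagonalTuple] at hx
    rw [Finset.mem_filter, Finset.Nat.mem_antidiagonalTuple, Fin.sum_univ_succ]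
    constructor
    · simp only [Fin.cons_zero, Fin.cons_succ]
      rw [hx.2.1]; omega
    · intro t
      refine Fin.cases ?_ ?_ t
      · simpa using hx.1.1
      · intro i; simpa using hx.2.2 i
  · intro h _; exact Fin.cons_self_tail h
  · intro x _; simp
  · intro h _
    rw [Fin.prod_univ_succ]
    rfl

theorem e_zero : e A 0 = 1 := by simp [e, T_zero_zero]

theorem sum_Icc_aux (k : ℕ) (f : ℕ → ℂ) :
    ∑ j ∈ Icc 1 k, f j = ∑ i ∈ range k, f (i + 1) := by
  rw [← Finset.Ico_add_one_right_eq_Icc, Finset.sum_Ico_eq_sum_range]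
  exact Finset.sum_congr rfl fun i _ => by rw [add_comm]

theorem e_rec {k : ℕ} (hk : 1 ≤ k) :
    e A k = -∑ j ∈ Icc 1 k, A j * e A (k - j) := by
  have h1 : e A k = -∑ s ∈ range k, (-1 : ℂ) ^ s * T A (s + 1) k := by
    rw [e, Finset.sum_range_succ']
    rw [T_zero_pos A hk]
    simp only [pow_zero, one_mul, mul_zero, add_zero, pow_succ]
    rw [← Finset.sum_neg_distrib]
    congr 1; funext s; ring
  rw [h1]
  congr 1
  have h2 : ∀ s ∈ range k, (-1 : ℂ) ^ s * T A (s + 1) k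
      = ∑ j ∈ Icc 1 k, A j * ((-1 : ℂ) ^ s * T A s (k - j)) := by
    intro s _
    rw [T_succ, Finset.mul_sum]
    congr 1; funext j; ring
  rw [Finset.sum_congr rfl h2, Finset.sum_comm]
  apply Finset.sum_congr rfl
  intro j hj
  rw [← Finset.mul_sum]
  congr 1
  rw [e]
  rw [Finset.mem_Icc] at hj
  symm
  apply Finset.sum_subset
  · apply Finset.range_subset_range.2; omega
  · intro s _ hs
    rw [Finset.mem_range, not_lt] at hs
    rw [T_eq_zero_of_lt A (by omega), mul_zero]

theorem c_eq_e (hA0 : A 0 = 1) (c : ℕ → ℂ) (hc0 : c 0 = 1)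
    (hrec : ∀ k, 1 ≤ k → ∑ j ∈ range (k + 1), A j * c (k - j) = 0) :
    ∀ k, c k = e A k := by
  intro k
  induction k using Nat.strong_induction_on with
  | _ k ih =>
    cases k with
    | zero => rw [hc0, e_zero]
    | succ k =>
      have h := hrec (k + 1) (by omega)
      rw [Finset.sum_range_succ'] at h
      simp only [Nat.sub_zero, hA0, one_mul] at h
      have h2 : ∑ i ∈ range (k + 1), A (i + 1) * c (k + 1 - (i + 1))
          = ∑ j ∈ Icc 1 (k + 1), A j * e A (k + 1 - j) := by
        rw [sum_Icc_aux]
        apply Finset.sum_congr rfl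
        intro i hi
        rw [Finset.mem_range] at hi
        rw [ih (k + 1 - (i + 1)) (by omega)]
      rw [h2] at h
      rw [e_rec A (by omega)]
      linear_combination h

theorem inner_sum {k : ℕ} (hk : 1 ≤ k) (B : ℂ) :
    (∑ s ∈ Icc 2 (k + 1),
      ∑ h ∈ (Finset.Nat.antidiagonalTuple (s - 1) k).filter (fun h => ∀ t, 1 ≤ h t),
        (-1 : ℂ) ^ s * (∏ t, A (h t)) * B)
    = -(e A k * B) := by
  have step1 : ∀ s ∈ Icc 2 (k + 1),
      (∑ h ∈ (Finset.Nat.antidiagonalTuple (s - 1) k).filter (fun h => ∀ t, 1 ≤ h t),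
        (-1 : ℂ) ^ s * (∏ t, A (h t)) * B)
      = (-1 : ℂ) ^ s * T A (s - 1) k * B := by
    intro s _
    simp only [T, Finset.mul_sum, Finset.sum_mul]
  rw [Finset.sum_congr rfl step1]
  have : ∑ s ∈ Icc 2 (k + 1), (-1 : ℂ) ^ s * T A (s - 1) k * B
      = ∑ i ∈ range k, (-1 : ℂ) ^ (2 + i) * T A (2 + i - 1) k * B := by
    rw [← Finset.Ico_add_one_right_eq_Icc, Finset.sum_Ico_eq_sum_range]
    have h2 : k + 1 + 1 - 2 = k := by omega
    rw [h2]
  rw [this]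
  have he : e A k = -∑ i ∈ range k, (-1 : ℂ) ^ i * T A (i + 1) k := by
    rw [e, Finset.sum_range_succ', T_zero_pos A hk]
    simp only [pow_zero, one_mul, mul_zero, add_zero, pow_succ]
    rw [← Finset.sum_neg_distrib]
    exact Finset.sum_congr rfl fun s _ => by ring
  rw [he, neg_mul, neg_neg, Finset.sum_mul]
  apply Finset.sum_congr rfl
  intro i _
  have h1 : 2 + i - 1 = i + 1 := by omega
  rw [h1, pow_add]
  ring

theorem bigsum (p : ℕ) (hp : 1 ≤ p) :
    (∑ q ∈ Finset.Icc 1 (p - 1), ∑ r ∈ Finset.range (p - q),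
      ∑ s ∈ Finset.Icc 2 (p - q - r + 1),
        ∑ h ∈ (Finset.Nat.antidiagonalTuple (s - 1) (p - q - r)).filter
            (fun h => ∀ t, 1 ≤ h t),
          (-1 : ℂ) ^ s * (∏ t, A (h t)) * A (q + r))
    = -∑ i ∈ range (p - 1), e A (i + 1) * (((p - 1 - i : ℕ) : ℂ) * A (p - 1 - i)) := by
  have step1 : ∀ q ∈ Icc 1 (p - 1), ∀ r ∈ range (p - q),
      (∑ s ∈ Finset.Icc 2 (p - q - r + 1),
        ∑ h ∈ (Finset.Nat.antidiagonalTuple (s - 1) (p - q - r)).filter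
            (fun h => ∀ t, 1 ≤ h t),
          (-1 : ℂ) ^ s * (∏ t, A (h t)) * A (q + r))
      = -(e A (p - (q + r)) * A (q + r)) := by
    intro q hq r hr
    rw [Finset.mem_Icc] at hq
    rw [Finset.mem_range] at hr
    rw [inner_sum A (by omega) (A (q + r))]
    rw [Nat.sub_sub]
  rw [Finset.sum_congr rfl fun q hq => Finset.sum_congr rfl (step1 q hq)]
  have step2 : ∀ q ∈ Icc 1 (p - 1),
      (∑ r ∈ range (p - q), -(e A (p - (q + r)) * A (q + r)))
      = ∑ m ∈ Icc q (p - 1), -(e A (p - m) * A m) := by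
    intro q hq
    rw [Finset.mem_Icc] at hq
    rw [← Finset.Ico_add_one_right_eq_Icc, Finset.sum_Ico_eq_sum_range]
    have : p - 1 + 1 - q = p - q := by omega
    rw [this]
  rw [Finset.sum_congr rfl step2]
  have step3 : ∑ q ∈ Icc 1 (p - 1), ∑ m ∈ Icc q (p - 1), -(e A (p - m) * A m)
      = ∑ m ∈ Icc 1 (p - 1), ∑ q ∈ Icc 1 m, -(e A (p - m) * A m) := by
    apply Finset.sum_comm'
    intro q m
    simp only [Finset.mem_Icc]
    omega
  rw [step3]
  have step4 : ∀ m ∈ Icc 1 (p - 1),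
      (∑ _q ∈ Icc 1 m, -(e A (p - m) * A m)) = (m : ℂ) * -(e A (p - m) * A m) := by
    intro m _
    rw [Finset.sum_const, Nat.card_Icc]
    have : m + 1 - 1 = m := by omega
    rw [this, nsmul_eq_mul]
  rw [Finset.sum_congr rfl step4, sum_Icc_aux]
  rw [← Finset.sum_range_reflect (fun i => ((i + 1 : ℕ) : ℂ) * -(e A (p - (i + 1)) * A (i + 1)))
    (p - 1)]
  rw [← Finset.sum_neg_distrib]
  apply Finset.sum_congr rfl
  intro j hj
  rw [Finset.mem_range] at hj
  have h1 : p - 1 - 1 - j + 1 = p - 1 - j := by omega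
  have h2 : p - (p - 1 - j) = j + 1 := by omega
  rw [h1, h2]
  ring


/-- geometric series `1/(1-aX)` -/
def geo (a : ℂ) : PowerSeries ℂ := PowerSeries.mk fun k => a ^ k

theorem one_sub_mul_geo (a : ℂ) :
    (1 - PowerSeries.C a * PowerSeries.X) * geo a = 1 := by
  ext n
  cases n with
  | zero =>
    simp [geo, PowerSeries.coeff_zero_eq_constantCoeff, map_mul, map_sub]
  | succ n =>
    rw [sub_mul, one_mul, map_sub, mul_assoc, PowerSeries.coeff_C_mul,
      PowerSeries.coeff_succ_X_mul, geo, PowerSeries.coeff_mk, PowerSeries.coeff_mk,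
      PowerSeries.coeff_one]
    simp [pow_succ]
    ring


theorem deriv_one_sub (a : ℂ) :
    PowerSeries.derivative ℂ (1 - PowerSeries.C a * PowerSeries.X)
      = -((1 - PowerSeries.C a * PowerSeries.X) * (PowerSeries.C a * geo a)) := by
  have h2 : (1 - PowerSeries.C a * PowerSeries.X) * (PowerSeries.C a * geo a)
      = PowerSeries.C a * ((1 - PowerSeries.C a * PowerSeries.X) * geo a) := by ring
  rw [h2, one_sub_mul_geo, mul_one]
  simp

theorem deriv_prod (M : Multiset ℂ) :
    PowerSeries.derivative ℂ ((M.map fun a => 1 - PowerSeries.C a * PowerSeries.X).prod)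
      = -((M.map fun a => 1 - PowerSeries.C a * PowerSeries.X).prod
          * (M.map fun a => PowerSeries.C a * geo a).sum) := by
  induction M using Multiset.induction with
  | empty => simp
  | cons a M ih =>
    rw [Multiset.map_cons, Multiset.prod_cons, Multiset.map_cons, Multiset.sum_cons]
    rw [Derivation.leibniz, smul_eq_mul, smul_eq_mul, ih, deriv_one_sub]
    ring

theorem constantCoeff_prod_one_sub (M : Multiset ℂ) :
    PowerSeries.constantCoeff
      ((M.map fun a => 1 - PowerSeries.C a * PowerSeries.X).prod) = 1 := by
  induction M using Multiset.induction with
  | empty => simp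
  | cons a M ih => simp [ih]

theorem coeff_ellsum (M : Multiset ℂ) (m : ℕ) :
    PowerSeries.coeff m ((M.map fun a => PowerSeries.C a * geo a).sum)
      = (M.map fun a => a ^ (m + 1)).sum := by
  rw [map_multiset_sum, Multiset.map_map]
  congr 1
  apply Multiset.map_congr rfl
  intro a _
  simp [geo, PowerSeries.coeff_C_mul, pow_succ, mul_comm]

theorem reflect_multiset_prod (M : Multiset ℂ) :
    reflect (Multiset.card M) ((M.map fun a => X - C a).prod)
      = (M.map fun a => 1 - C a * X).prod := by
  induction M using Multiset.induction with
  | empty => simp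
  | cons a M ih =>
    rw [Multiset.map_cons, Multiset.prod_cons, Multiset.card_cons]
    have hb : ((M.map fun a => X - C a).prod).natDegree ≤ Multiset.card M := by
      rw [Polynomial.natDegree_multiset_prod_X_sub_C_eq_card]
    have hrm := Polynomial.reflect_mul (X - C a) ((M.map fun a => X - C a).prod)
      (F := 1) (G := Multiset.card M) (by simp) hb
    rw [add_comm (Multiset.card M) 1, hrm, ih, Multiset.map_cons, Multiset.prod_cons]
    congr 1
    rw [reflect_sub, reflect_C]
    have : (X : ℂ[X]) = X ^ 1 := (pow_one X).symm
    rw [this, reflect_monomial]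
    simp



theorem reflect_finset_sum {ι : Type*} (N : ℕ) (s : Finset ι) (f : ι → ℂ[X]) :
    Polynomial.reflect N (∑ i ∈ s, f i) = ∑ i ∈ s, Polynomial.reflect N (f i) := by
  classical
  induction s using Finset.induction_on with
  | empty => simp
  | insert _ _ hx ih =>
    rw [Finset.sum_insert hx, Finset.sum_insert hx, Polynomial.reflect_add, ih]

theorem polyCoe_prod {ι : Type*} (s : Finset ι) (f : ι → ℂ[X]) :
    ((∏ i ∈ s, f i : ℂ[X]) : PowerSeries ℂ) = ∏ i ∈ s, ((f i : ℂ[X]) : PowerSeries ℂ) :=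
  map_prod (Polynomial.coeToPowerSeries.ringHom (R := ℂ)) f s

end
end Statement8Aux

open Finset Polynomial Statement8Aux

/-- Let `P(z) = (z - z₁)⋯(z - zₙ)`, `λ₁, …, λₙ ∈ ℂ` with
`Λ = ∑ λ_j ≠ 0`, `α_j = λ_j/Λ`, and `Q(z) = P(z) ∑_j λ_j/(z - z_j)` (of degree `n-1`).
Then for every `p ≥ 1`, the mean of the `p`-th powers of the zeros of `Q` (with
multiplicity) equals
`(n/(n-1))·(1/n)∑_j z_jᵖ − (p/(n-1))∑_j α_j z_jᵖ
  + (1/(n-1)) ∑' (-1)ˢ ∏_{t=1}^{s-1}(∑_j α_j z_j^{h_t}) · ∑_j α_j z_j^{q+r}`,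
where `∑'` runs over `q ∈ {1,…,p-1}`, `r ∈ {0,…,p-q-1}`, `s ∈ {2,…,p-q-r+1}` and all
tuples `(h₁,…,h_{s-1})` of positive integers with `h₁ + ⋯ + h_{s-1} = p - q - r`. -/
theorem statement8
    (n : ℕ) (hn : 2 ≤ n) (z : Fin n → ℂ) (lam : Fin n → ℂ)
    (hΛ : ∑ j, lam j ≠ 0)
    (α : Fin n → ℂ) (hα : ∀ j, α j = lam j / ∑ i, lam i)
    (p : ℕ) (hp : 1 ≤ p) :
    ((n : ℂ) - 1)⁻¹ *
        (((∑ j, Polynomial.C (lam j) *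
              ∏ i ∈ Finset.univ.erase j, (X - C (z i))).roots.map
            (fun w => w ^ p)).sum)
      = ((n : ℂ) / ((n : ℂ) - 1)) * ((n : ℂ)⁻¹ * ∑ j, z j ^ p)
        - ((p : ℂ) / ((n : ℂ) - 1)) * ∑ j, α j * z j ^ p
        + ((n : ℂ) - 1)⁻¹ *
            ∑ q ∈ Finset.Icc 1 (p - 1), ∑ r ∈ Finset.range (p - q),
              ∑ s ∈ Finset.Icc 2 (p - q - r + 1),
                ∑ h ∈ (Finset.Nat.antidiagonalTuple (s - 1) (p - q - r)).filter
                    (fun h => ∀ t, 1 ≤ h t),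
                  (-1 : ℂ) ^ s * (∏ t, (∑ j, α j * z j ^ (h t))) *
                    (∑ j, α j * z j ^ (q + r)) := by
  classical
  obtain ⟨p, rfl⟩ : ∃ p', p = p' + 1 := ⟨p - 1, by omega⟩
  set A : ℕ → ℂ := fun k => ∑ j, α j * z j ^ k with hA
  set Λ : ℂ := ∑ i, lam i with hΛdef
  have hA0 : A 0 = 1 := by
    simp only [hA, pow_zero, mul_one]
    rw [Finset.sum_congr rfl fun j _ => hα j, ← Finset.sum_div]
    exact div_self hΛ
  set Q : ℂ[X] := ∑ j, Polynomial.C (lam j) * ∏ i ∈ Finset.univ.erase j, (X - C (z i))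
    with hQ
  -- degree facts
  have hcardE : ∀ j : Fin n, (Finset.univ.erase j).card = n - 1 := by
    intro j
    rw [Finset.card_erase_of_mem (Finset.mem_univ j), Finset.card_univ, Fintype.card_fin]
  have hmono : ∀ j : Fin n, (∏ i ∈ Finset.univ.erase j, (X - C (z i))).Monic :=
    fun j => monic_prod_of_monic _ _ fun i _ => monic_X_sub_C (z i)
  have hdegj : ∀ j : Fin n, (∏ i ∈ Finset.univ.erase j, (X - C (z i))).natDegree = n - 1 := by
    intro j
    rw [natDegree_prod_of_monic _ _ fun i _ => monic_X_sub_C (z i)]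
    simp [natDegree_X_sub_C, hcardE j]
  have hQdegle : Q.natDegree ≤ n - 1 := natDegree_sum_le_of_forall_le _ _ fun j _ =>
    le_trans (natDegree_C_mul_le _ _) (le_of_eq (hdegj j))
  have hQcoeff : Q.coeff (n - 1) = Λ := by
    rw [hQ, finset_sum_coeff, hΛdef]
    apply Finset.sum_congr rfl
    intro j _
    rw [coeff_C_mul]
    have h1 : (∏ i ∈ Finset.univ.erase j, (X - C (z i))).coeff (n - 1) = 1 := by
      have h2 := (hmono j).coeff_natDegree
      rwa [hdegj j] at h2
    rw [h1, mul_one]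
  have hQdeg : Q.natDegree = n - 1 :=
    natDegree_eq_of_le_of_coeff_ne_zero hQdegle (hQcoeff ▸ hΛ)
  have hlead : Q.leadingCoeff = Λ := by rw [Polynomial.leadingCoeff, hQdeg, hQcoeff]
  have hsplits : Splits Q := IsAlgClosed.splits Q
  have hfact : Q = Polynomial.C Λ * (Q.roots.map fun a => X - C a).prod := by
    conv_lhs => rw [hsplits.eq_prod_roots]
    rw [hlead]
  have hcard : Multiset.card Q.roots = n - 1 :=
    (splits_iff_card_roots.mp hsplits).trans hQdeg
  -- reflections
  have hreflectQ1 : reflect (n - 1) Q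
      = ∑ j, Polynomial.C (lam j) * ∏ i ∈ Finset.univ.erase j, (1 - C (z i) * X) := by
    rw [hQ, reflect_finset_sum]
    apply Finset.sum_congr rfl
    intro j _
    rw [reflect_C_mul]
    congr 1
    have h1 : (∏ i ∈ Finset.univ.erase j, (X - C (z i)))
        = (((Finset.univ.erase j).val.map z).map fun a => X - C a).prod := by
      rw [Finset.prod_eq_multiset_prod, Multiset.map_map]
      rfl
    have h2 : (∏ i ∈ Finset.univ.erase j, (1 - C (z i) * X))
        = (((Finset.univ.erase j).val.map z).map fun a => 1 - C a * X).prod := by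
      rw [Finset.prod_eq_multiset_prod, Multiset.map_map]
      rfl
    have h3 : Multiset.card ((Finset.univ.erase j).val.map z) = n - 1 := by
      rw [Multiset.card_map]
      exact hcardE j
    rw [h1, h2, ← h3, reflect_multiset_prod]
  have hreflectQ2 : reflect (n - 1) Q
      = Polynomial.C Λ * (Q.roots.map fun a => 1 - C a * X).prod := by
    conv_lhs => rw [hfact]
    rw [reflect_C_mul, ← hcard, reflect_multiset_prod]
  have hpoly : (∑ j, Polynomial.C (lam j) * ∏ i ∈ Finset.univ.erase j, (1 - C (z i) * X))
      = Polynomial.C Λ * (Q.roots.map fun a => 1 - C a * X).prod := by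
    rw [← hreflectQ1, hreflectQ2]
  -- pass to power series
  set M : Multiset ℂ := Q.roots with hM
  have hps : (∑ j, PowerSeries.C (lam j) *
        ∏ i ∈ Finset.univ.erase j, (1 - PowerSeries.C (z i) * PowerSeries.X))
      = PowerSeries.C Λ * (M.map fun a => 1 - PowerSeries.C a * PowerSeries.X).prod := by
    have h := congrArg (Polynomial.coeToPowerSeries.ringHom (R := ℂ)) hpoly
    simpa only [map_sum, map_mul, map_multiset_prod, Multiset.map_map, map_sub, map_one,
      Function.comp, Polynomial.coeToPowerSeries.ringHom_apply, polyCoe_prod,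
      Polynomial.coe_C, Polynomial.coe_X, Polynomial.coe_one, Polynomial.coe_sub,
      Polynomial.coe_mul] using h
  set Pst : PowerSeries ℂ :=
    ((Finset.univ.val.map z).map fun a => 1 - PowerSeries.C a * PowerSeries.X).prod
    with hPst
  set G : PowerSeries ℂ := ∑ j, PowerSeries.C (α j) * geo (z j) with hG
  have hPstfin : Pst = ∏ i, (1 - PowerSeries.C (z i) * PowerSeries.X) := by
    rw [hPst, Multiset.map_map, Finset.prod_eq_multiset_prod]
    rfl
  have hlam : ∀ j, lam j = Λ * α j := by
    intro j
    rw [hα j]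
    field_simp
  have hsum2 : (∑ j, PowerSeries.C (lam j) *
        ∏ i ∈ Finset.univ.erase j, (1 - PowerSeries.C (z i) * PowerSeries.X))
      = PowerSeries.C Λ * (Pst * G) := by
    have hterm : ∀ j ∈ Finset.univ, PowerSeries.C (lam j) *
        ∏ i ∈ Finset.univ.erase j, (1 - PowerSeries.C (z i) * PowerSeries.X)
        = PowerSeries.C Λ * (Pst * (PowerSeries.C (α j) * geo (z j))) := by
      intro j _
      rw [hlam j, map_mul, hPstfin,
        ← Finset.mul_prod_erase Finset.univ _ (Finset.mem_univ j)]
      have hg := one_sub_mul_geo (z j)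
      linear_combination (-(PowerSeries.C Λ) * PowerSeries.C (α j) *
        ∏ i ∈ Finset.univ.erase j, (1 - PowerSeries.C (z i) * PowerSeries.X)) * hg
    rw [Finset.sum_congr rfl hterm, ← Finset.mul_sum, ← Finset.mul_sum, hG]
  have hCΛ : PowerSeries.C Λ ≠ 0 := by
    intro h
    apply hΛ
    have h2 := congrArg (PowerSeries.constantCoeff) h
    simpa using h2
  have hkey : (M.map fun a => 1 - PowerSeries.C a * PowerSeries.X).prod = Pst * G :=
    mul_left_cancel₀ hCΛ (hps.symm.trans hsum2)
  set SR : PowerSeries ℂ := (M.map fun a => PowerSeries.C a * geo a).sum with hSRdef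
  set SP : PowerSeries ℂ :=
    ((Finset.univ.val.map z).map fun a => PowerSeries.C a * geo a).sum with hSPdef
  have hPne : Pst ≠ 0 := by
    intro h
    have h1 := constantCoeff_prod_one_sub (Finset.univ.val.map z)
    rw [← hPst, h, map_zero] at h1
    exact zero_ne_one h1
  have hder := congrArg (PowerSeries.derivative ℂ) hkey
  rw [deriv_prod, ← hSRdef, hkey, Derivation.leibniz, smul_eq_mul, smul_eq_mul] at hder
  rw [hPst, deriv_prod, ← hPst, ← hSPdef] at hder
  have hdG : PowerSeries.derivative ℂ G = G * (SP - SR) := by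
    apply mul_left_cancel₀ hPne
    linear_combination -hder
  have hGc1 : PowerSeries.constantCoeff G = 1 := by
    have h1 : PowerSeries.constantCoeff G = A 0 := by
      rw [hG, map_sum, hA]
      simp [geo]
    rw [h1, hA0]
  have hGc : PowerSeries.constantCoeff G ≠ 0 := by
    rw [hGc1]; exact one_ne_zero
  have hinv : G⁻¹ * G = 1 := PowerSeries.inv_mul_cancel G hGc
  have hSR2 : SR = SP - G⁻¹ * PowerSeries.derivative ℂ G := by
    rw [hdG, ← mul_assoc, hinv, one_mul]
    ring
  -- coefficient extraction at degree p
  have hcR : PowerSeries.coeff p SR = (M.map fun w => w ^ (p + 1)).sum := by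
    rw [hSRdef, coeff_ellsum]
  have hcP : PowerSeries.coeff p SP = ∑ j, z j ^ (p + 1) := by
    rw [hSPdef, coeff_ellsum, Multiset.map_map, Finset.sum_eq_multiset_sum]
    rfl
  have hGk : ∀ k, PowerSeries.coeff k G = A k := by
    intro k
    rw [hG, map_sum, hA]
    simp [geo]
  set cc : ℕ → ℂ := fun k => PowerSeries.coeff k G⁻¹ with hcc
  have hcc0 : cc 0 = 1 := by
    rw [hcc]
    simp only [PowerSeries.coeff_zero_eq_constantCoeff]
    rw [PowerSeries.constantCoeff_inv, hGc1, inv_one]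
  have hrecc : ∀ k, 1 ≤ k → ∑ j ∈ Finset.range (k + 1), A j * cc (k - j) = 0 := by
    intro k hk
    have h1 : PowerSeries.coeff k (G * G⁻¹) = 0 := by
      rw [PowerSeries.mul_inv_cancel G hGc, PowerSeries.coeff_one, if_neg (by omega)]
    rw [PowerSeries.coeff_mul, Finset.Nat.sum_antidiagonal_eq_sum_range_succ_mk] at h1
    simpa only [hGk] using h1
  have hcce : ∀ k, cc k = e A k := c_eq_e A hA0 cc hcc0 hrecc
  have hcceval : ∀ k, PowerSeries.coeff k G⁻¹ = e A k := hcce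
  have hcmid : PowerSeries.coeff p (G⁻¹ * PowerSeries.derivative ℂ G)
      = (∑ i ∈ Finset.range p, e A (i + 1) * (((p - i : ℕ) : ℂ) * A (p - i)))
        + ((p : ℂ) + 1) * A (p + 1) := by
    rw [PowerSeries.coeff_mul, Finset.Nat.sum_antidiagonal_eq_sum_range_succ_mk,
      Finset.sum_range_succ']
    congr 1
    · apply Finset.sum_congr rfl
      intro i hi
      rw [Finset.mem_range] at hi
      rw [PowerSeries.coeff_derivative, hcceval, hGk]
      have h1 : p - (i + 1) + 1 = p - i := by omega
      have h2 : p - (1 + i) + 1 = p - i := by omega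
      rw [h1, ← h2]
      push_cast
      ring
    · rw [PowerSeries.coeff_derivative, hcceval 0, e_zero, Nat.sub_zero, hGk]
      push_cast
      ring
  have hq := congrArg (PowerSeries.coeff p) hSR2
  rw [map_sub, hcR, hcP, hcmid] at hq
  have hB := bigsum A (p + 1) (by omega)
  simp only [Nat.add_sub_cancel] at hB
  simp only [hA] at hq hB
  rw [hq]
  simp only [Nat.add_sub_cancel]
  rw [hB]
  have hn0 : (n : ℂ) ≠ 0 := Nat.cast_ne_zero.mpr (by omega)
  have hn1 : (n : ℂ) - 1 ≠ 0 := by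
    intro h
    have h2 : ((n : ℕ) : ℂ) = ((1 : ℕ) : ℂ) := by push_cast; linear_combination h
    have h3 := Nat.cast_injective (R := ℂ) h2
    omega
  push_cast
  field_simp
  ring
end

section
/- For every p ∈ ℕ there is a constant C_p > 0, depending only on p, such that for every n ≥ 2 and all z₁, …, zₙ ∈ ℂ with |z_j| = 1 for all j, the critical points w₁, …, w_{n−1} of P(z) := (z − z₁)⋯(z − zₙ) (i.e. the zeros of P′, counted with multiplicity) satisfy |(1/(n−1)) ∑_{i=1}^{n−1} wᵢᵖ − (1/n) ∑_{j=1}^n z_jᵖ| ≤ C_p/n. -/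
open Polynomial

noncomputable section Statement9Aux

namespace Statement9Aux

/-- The polynomial `∏_{a ∈ s} (1 - a X)`. -/
def pol (s : Multiset ℂ) : ℂ[X] := (s.map fun a => 1 - C a * X).prod

/-- The power-sum generating series `∑_{k ≥ 1} (∑_{a∈s} a^k) X^k`. -/
def psum (s : Multiset ℂ) : PowerSeries ℂ :=
  PowerSeries.mk fun k => if k = 0 then 0 else (s.map (· ^ k)).sum

lemma geom_mul (a : ℂ) :
    ((1 - C a * X : ℂ[X]) : PowerSeries ℂ) * PowerSeries.mk (fun k => a ^ k) = 1 := by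
  rw [Polynomial.coe_sub, Polynomial.coe_one, Polynomial.coe_mul, Polynomial.coe_C,
    Polynomial.coe_X]
  ext k
  rcases k with _ | k
  · simp
  · rw [sub_mul, one_mul, map_sub, mul_assoc, PowerSeries.coeff_C_mul,
      PowerSeries.coeff_succ_X_mul, PowerSeries.coeff_mk, PowerSeries.coeff_mk]
    simp [pow_succ, mul_comm]

lemma psA_eq (a : ℂ) :
    PowerSeries.mk (fun k => if k = 0 then 0 else a ^ k) =
      PowerSeries.C a * PowerSeries.X * PowerSeries.mk (fun k => a ^ k) := by
  ext k
  rcases k with _ | k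
  · simp
  · rw [PowerSeries.coeff_mk, mul_assoc, PowerSeries.coeff_C_mul,
      PowerSeries.coeff_succ_X_mul, PowerSeries.coeff_mk]
    simp [pow_succ, mul_comm]

lemma psum_cons (a : ℂ) (s : Multiset ℂ) :
    psum (a ::ₘ s) = PowerSeries.mk (fun k => if k = 0 then 0 else a ^ k) + psum s := by
  ext k
  rcases k with _ | k
  · simp [psum]
  · simp [psum, Multiset.map_cons, Multiset.sum_cons]

lemma pol_mul_psum (s : Multiset ℂ) :
    (pol s : PowerSeries ℂ) * psum s
      = -(PowerSeries.X * (derivative (pol s) : PowerSeries ℂ)) := by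
  induction s using Multiset.induction_on with
  | empty =>
      have h : psum 0 = 0 := by
        ext k; rcases k with _ | k <;> simp [psum]
      simp [pol, h]
  | cons a s ih =>
      have hpol : pol (a ::ₘ s) = (1 - C a * X) * pol s := by
        rw [pol, Multiset.map_cons, Multiset.prod_cons]; rfl
      have hder : derivative ((1 - C a * X) * pol s)
          = -C a * pol s + (1 - C a * X) * derivative (pol s) := by
        rw [derivative_mul]
        congr 1
        · congr 1
          simp
      rw [hpol, psum_cons, hder, psA_eq]
      push_cast [Polynomial.coe_mul, Polynomial.coe_add, Polynomial.coe_sub,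
        Polynomial.coe_neg, Polynomial.coe_one, Polynomial.coe_C, Polynomial.coe_X]
      have h1 := geom_mul a
      rw [Polynomial.coe_sub, Polynomial.coe_one, Polynomial.coe_mul, Polynomial.coe_C,
        Polynomial.coe_X] at h1
      linear_combination ((pol s : PowerSeries ℂ) * PowerSeries.C a * PowerSeries.X) * h1
        + (1 - PowerSeries.C a * PowerSeries.X) * ih



lemma reflect_one_X_sub_C (a : ℂ) : reflect 1 (X - C a) = 1 - C a * X := by
  ext j
  rw [coeff_reflect]
  rcases j with _ | j
  · simp [revAt_le]
  · rcases j with _ | j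
    · simp [revAt_le, coeff_one]
    · rw [revAt_eq_self_of_lt (by omega)]
      simp only [coeff_sub, coeff_X, coeff_C]
      rw [coeff_one, coeff_C_mul, coeff_X]
      norm_num

lemma reflect_prod (s : Multiset ℂ) :
    reflect (Multiset.card s) ((s.map fun a => X - C a).prod) = pol s := by
  induction s using Multiset.induction_on with
  | empty =>
      ext j
      rcases j with _ | j <;> simp [pol, coeff_reflect, revAt, coeff_one]
  | cons a s ih =>
      rw [Multiset.card_cons, Multiset.map_cons, Multiset.prod_cons]
      have h := reflect_mul (X - C a) ((s.map fun a => X - C a).prod)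
        (F := 1) (G := Multiset.card s)
        (natDegree_X_sub_C_le a)
        (by rw [natDegree_multiset_prod_X_sub_C_eq_card])
      rw [add_comm] at h
      rw [h, ih, reflect_one_X_sub_C]
      simp only [pol, Multiset.map_cons, Multiset.prod_cons]

lemma reflect_derivative (f : ℂ[X]) (m : ℕ) (hf : f.natDegree ≤ m + 1) :
    reflect m (derivative f) =
      C ((m + 1 : ℕ) : ℂ) * reflect (m + 1) f - X * derivative (reflect (m + 1) f) := by
  have hdf : (derivative f).natDegree ≤ m := le_trans (natDegree_derivative_le f) (by omega)
  ext j
  rw [coeff_reflect, coeff_sub, coeff_C_mul, coeff_reflect]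
  rcases Nat.lt_or_ge j (m + 1) with hj | hj
  · have hj' : j ≤ m := Nat.lt_succ_iff.mp hj
    rw [revAt_le hj', revAt_le (by omega : j ≤ m + 1), coeff_derivative]
    rcases j with _ | j
    · rw [coeff_X_mul_zero]  -- maybe wrong name
      have h1 : m - 0 + 1 = m + 1 - 0 := by omega
      rw [h1]
      push_cast [Nat.sub_zero]
      ring
    · rw [coeff_X_mul, coeff_derivative, coeff_reflect,
        revAt_le (by omega : j + 1 ≤ m + 1)]
      have h1 : m - (j + 1) + 1 = m + 1 - (j + 1) := by omega
      rw [h1]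
      have h2 : ((m - (j+1) : ℕ) : ℂ) = (m : ℂ) - (j+1 : ℕ) := by
        rw [Nat.cast_sub (by omega)]
      push_cast [h2]
      ring
  · rw [revAt_eq_self_of_lt (by omega)]
    rw [coeff_eq_zero_of_natDegree_lt (by omega : (derivative f).natDegree < j)]
    rcases Nat.lt_or_ge j (m + 2) with hj2 | hj2
    · have hjm : j = m + 1 := by omega
      subst hjm
      rw [revAt_le (le_refl (m+1)), Nat.sub_self, coeff_X_mul, coeff_derivative,
        coeff_reflect, revAt_le (le_refl (m+1)), Nat.sub_self]
      push_cast
      ring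
    · rw [revAt_eq_self_of_lt (by omega),
        coeff_eq_zero_of_natDegree_lt (by omega : f.natDegree < j)]
      obtain ⟨j', rfl⟩ : ∃ j', j = j' + 1 := ⟨j - 1, by omega⟩
      rw [coeff_X_mul, coeff_derivative, coeff_reflect, revAt_eq_self_of_lt (by omega),
        coeff_eq_zero_of_natDegree_lt (by omega : f.natDegree < j' + 1)]
      push_cast
      ring

lemma four_le (q : ℕ) : (4 * q : ℝ) ≤ 3 * 5 ^ q := by
  induction q with
  | zero => norm_num
  | succ q ih =>
      have h5 : (1:ℝ) ≤ 5 ^ q := one_le_pow₀ (by norm_num)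
      push_cast [pow_succ] at *
      nlinarith

end Statement9Aux

open Statement9Aux

set_option maxHeartbeats 1600000 in
/-- For every `p ≥ 1` there is a constant `C_p > 0`, depending only on
`p`, such that for every `n ≥ 2` and all `z₁, …, zₙ` on the unit circle, the critical
points `w₁, …, w_{n-1}` (zeros of `P'` with multiplicity) of
`P(z) = (z - z₁)⋯(z - zₙ)` satisfy
`|(1/(n-1)) ∑ᵢ wᵢᵖ − (1/n) ∑ⱼ zⱼᵖ| ≤ C_p/n`. -/
theorem statement9 (p : ℕ) (hp : 1 ≤ p) :
    ∃ Cp : ℝ, 0 < Cp ∧ ∀ n : ℕ, 2 ≤ n → ∀ z : Fin n → ℂ,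
      (∀ j, ‖z j‖ = 1) →
      ‖(((n : ℂ) - 1)⁻¹ *
            (((Polynomial.derivative (∏ j, (X - C (z j)))).roots.map
              (fun w => w ^ p)).sum)
          - (n : ℂ)⁻¹ * ∑ j, z j ^ p)‖ ≤ Cp / n := by
  refine ⟨2 * 5 ^ p + 2, by positivity, ?_⟩
  intro n hn z hz
  obtain ⟨m, rfl⟩ : ∃ m, n = m + 1 := ⟨n - 1, by omega⟩
  have hm : 1 ≤ m := by omega
  set Z : Multiset ℂ := Multiset.map z Finset.univ.val with hZ
  set P : ℂ[X] := ∏ j, (X - C (z j)) with hPdef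
  have hPZ : P = (Z.map fun a => X - C a).prod := by
    rw [hPdef, hZ, Multiset.map_map, Finset.prod_eq_multiset_prod]
    rfl
  have hcardZ : Multiset.card Z = m + 1 := by simp [hZ]
  have hdegP : P.natDegree = m + 1 := by
    rw [hPZ, natDegree_multiset_prod_X_sub_C_eq_card, hcardZ]
  have hPmonic : P.Monic := by
    rw [hPZ]; exact monic_multiset_prod_of_monic _ _ fun a _ => monic_X_sub_C a
  set Q : ℂ[X] := derivative P with hQdef
  have hQcoeff : Q.coeff m = ((m + 1 : ℕ) : ℂ) := by
    rw [hQdef, coeff_derivative]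
    have : P.coeff (m + 1) = 1 := by
      have := hPmonic.coeff_natDegree
      rwa [hdegP] at this
    rw [this]
    push_cast
    ring
  have hm1 : ((m + 1 : ℕ) : ℂ) ≠ 0 := Nat.cast_ne_zero.mpr (by omega)
  have hdegQ : Q.natDegree = m := by
    refine le_antisymm (le_trans (natDegree_derivative_le P) (by omega)) ?_
    exact le_natDegree_of_ne_zero (hQcoeff ▸ hm1)
  set W : Multiset ℂ := Q.roots with hW
  have hsplits : Q.Splits := IsAlgClosed.splits Q
  have hcardW : Multiset.card W = m := by
    rw [hW, splits_iff_card_roots.mp hsplits, hdegQ]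
  have hlead : Q.leadingCoeff = ((m + 1 : ℕ) : ℂ) := by
    rw [leadingCoeff, hdegQ, hQcoeff]
  have hQfact : Q = C ((m + 1 : ℕ) : ℂ) * (W.map fun a => X - C a).prod := by
    conv_lhs => rw [hsplits.eq_prod_roots]
    rw [hlead]
  -- E1 : polynomial identity
  have hE1 : C ((m + 1 : ℕ) : ℂ) * pol W
      = C ((m + 1 : ℕ) : ℂ) * pol Z - X * derivative (pol Z) := by
    have h1 := reflect_derivative P m (le_of_eq hdegP)
    have h2 : reflect (m + 1) P = pol Z := by
      rw [hPZ, ← hcardZ, reflect_prod]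
    have h3 : reflect m Q = C ((m + 1 : ℕ) : ℂ) * pol W := by
      rw [hQfact, reflect_C_mul, ← hcardW, reflect_prod]
    rw [← h3, hQdef, h1, h2]
  -- move to power series
  set NN : PowerSeries ℂ := PowerSeries.C ((m + 1 : ℕ) : ℂ) with hNN
  have hE2 := pol_mul_psum Z
  have hE3 := pol_mul_psum W
  have hE1s : NN * (pol W : PowerSeries ℂ)
      = NN * (pol Z : PowerSeries ℂ)
        - PowerSeries.X * (derivative (pol Z) : PowerSeries ℂ) := by
    have h := congrArg (fun q : ℂ[X] => (q : PowerSeries ℂ)) hE1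
    simpa only [Polynomial.coe_mul, Polynomial.coe_sub, Polynomial.coe_C,
      Polynomial.coe_X, hNN] using h
  have hnB : NN * (pol W : PowerSeries ℂ)
      = (pol Z : PowerSeries ℂ) * (NN + psum Z) := by
    linear_combination hE1s - hE2
  have hD := congrArg (fun F => PowerSeries.X * (PowerSeries.derivative ℂ F)) hnB
  simp only [Derivation.leibniz, smul_eq_mul, map_add, PowerSeries.derivative_C,
    PowerSeries.derivative_coe, mul_zero, add_zero, zero_add, hNN] at hD
  rw [← hNN] at hD
  have hA0 : (pol Z : PowerSeries ℂ) ≠ 0 := by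
    rw [Ne, Polynomial.coe_eq_zero_iff]
    intro h
    have h1 : (pol Z).coeff 0 = 1 := by
      simp [pol, coeff_zero_multiset_prod, Multiset.map_map]
    rw [h] at h1
    simp at h1
  have hstar' : (pol Z : PowerSeries ℂ) * ((NN + psum Z) * psum W)
      = (pol Z : PowerSeries ℂ)
        * (psum Z * (NN + psum Z) - PowerSeries.X * (PowerSeries.derivative ℂ (psum Z))) := by
    linear_combination (-psum W) * hnB + NN * hE3 - hD - (NN + psum Z) * hE2
  have hstar := mul_left_cancel₀ hA0 hstar'
  -- power sums
  set pi : ℕ → ℂ := fun k => if k = 0 then 0 else ∑ j, z j ^ k with hpi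
  set sg : ℕ → ℂ := fun k => if k = 0 then 0 else (W.map (· ^ k)).sum with hsg
  have hcoeffZ : ∀ k, PowerSeries.coeff k (psum Z) = pi k := by
    intro k
    rw [hpi]
    simp only [psum, PowerSeries.coeff_mk]
    congr 1
    rw [hZ, Multiset.map_map]
    exact (Finset.sum_eq_multiset_sum _ _).symm
  have hcoeffW : ∀ k, PowerSeries.coeff k (psum W) = sg k := by
    intro k
    rw [hsg]
    simp only [psum, PowerSeries.coeff_mk]
  have hpi0 : pi 0 = 0 := by simp [hpi]
  have hsg0 : sg 0 = 0 := by simp [hsg]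
  have hpibound : ∀ k, ‖pi k‖ ≤ (m + 1 : ℝ) := by
    intro k
    simp only [hpi]
    split_ifs with h
    · simp
      positivity
    · refine le_trans (norm_sum_le _ _) ?_
      have h1 : ∀ j : Fin (m + 1), ‖z j ^ k‖ = 1 := fun j => by
        rw [norm_pow, hz j, one_pow]
      rw [Finset.sum_congr rfl fun j _ => h1 j]
      simp
  -- the key recursion
  have hstar2 : NN * psum W + psum Z * psum W
      = NN * psum Z + psum Z * psum Z
        - PowerSeries.X * (PowerSeries.derivative ℂ (psum Z)) := by
    linear_combination hstar
  rw [hNN] at hstar2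
  have hrec : ∀ q : ℕ, ((m + 1 : ℕ) : ℂ) * (sg q - pi q)
      = -(q : ℂ) * pi q
        - ∑ ij ∈ Finset.HasAntidiagonal.antidiagonal q, pi ij.1 * (sg ij.2 - pi ij.2) := by
    intro q
    rcases q with _ | q'
    · simp [hpi0, hsg0]
    · have h := congrArg (PowerSeries.coeff (q' + 1)) hstar2
      simp only [map_add, map_sub] at h
      rw [PowerSeries.coeff_C_mul, PowerSeries.coeff_C_mul,
        PowerSeries.coeff_succ_X_mul, PowerSeries.coeff_derivative,
        PowerSeries.coeff_mul, PowerSeries.coeff_mul] at h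
      simp only [hcoeffZ, hcoeffW] at h
      simp only [mul_sub, Finset.sum_sub_distrib]
      push_cast at h ⊢
      linear_combination h
  -- the bound on the discrepancy
  have hdel : ∀ q : ℕ, ‖sg q - pi q‖ ≤ 5 ^ q := by
    intro q
    induction q using Nat.strong_induction_on with
    | _ q ih =>
      rcases q with _ | q'
      · simp [hpi0, hsg0]
      · have h := hrec (q' + 1)
        have hS : ‖∑ ij ∈ Finset.HasAntidiagonal.antidiagonal (q' + 1),
              pi ij.1 * (sg ij.2 - pi ij.2)‖
            ≤ (m + 1 : ℝ) * ((5 ^ (q' + 1) - 1) / 4) := by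
          refine le_trans (norm_sum_le _ _) ?_
          have hb : ∀ ij ∈ Finset.HasAntidiagonal.antidiagonal (q' + 1),
              ‖pi ij.1 * (sg ij.2 - pi ij.2)‖
                ≤ (if ij.1 = 0 then 0 else (m + 1 : ℝ) * 5 ^ ij.2) := by
            intro ij hij
            split_ifs with h0
            · simp [norm_mul, h0, hpi0]
            · have hj : ij.2 < q' + 1 := by
                have := Finset.HasAntidiagonal.mem_antidiagonal.mp hij
                omega
              rw [norm_mul]
              exact mul_le_mul (hpibound ij.1) (ih ij.2 hj) (by positivity) (by positivity)
          refine le_trans (Finset.sum_le_sum hb) ?_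
          rw [Finset.Nat.sum_antidiagonal_eq_sum_range_succ_mk, Finset.sum_range_succ']
          simp only [Nat.succ_ne_zero, Nat.succ_sub_succ_eq_sub, ite_false, ite_true,
            if_true, if_false, add_zero]
          rw [← Finset.mul_sum]
          have hrefl : ∑ k ∈ Finset.range (q' + 1), (5:ℝ) ^ (q' - k)
              = ∑ k ∈ Finset.range (q' + 1), (5:ℝ) ^ k := by
            have h5 := Finset.sum_range_reflect (fun k => (5:ℝ) ^ k) (q' + 1)
            simpa using h5
          rw [hrefl, geom_sum_eq (by norm_num : (5:ℝ) ≠ 1)]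
          norm_num
        have hmpos : (0:ℝ) < (m + 1 : ℝ) := by positivity
        have habs : ((m + 1 : ℝ)) * ‖sg (q' + 1) - pi (q' + 1)‖
            ≤ (m + 1 : ℝ) * ((q' + 1 : ℝ) + (5 ^ (q' + 1) - 1) / 4) := by
          have h1 : ‖((m + 1 : ℕ) : ℂ) * (sg (q' + 1) - pi (q' + 1))‖
              = (m + 1 : ℝ) * ‖sg (q' + 1) - pi (q' + 1)‖ := by
            rw [norm_mul, Complex.norm_natCast]
            push_cast
            ring
          rw [← h1, h]
          refine le_trans (norm_sub_le _ _) ?_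
          have h2 : ‖-((q' + 1 : ℕ) : ℂ) * pi (q' + 1)‖
              ≤ (q' + 1 : ℝ) * (m + 1 : ℝ) := by
            rw [norm_mul, norm_neg, Complex.norm_natCast]
            push_cast
            have hb := hpibound (q' + 1)
            nlinarith [norm_nonneg (pi (q' + 1))]
          push_cast at h2 hS ⊢
          nlinarith
        have h3 := le_of_mul_le_mul_left (le_of_le_of_eq habs rfl) hmpos
        have h4 := four_le (q' + 1)
        push_cast at h3 h4 ⊢
        nlinarith [pow_pos (by norm_num : (0:ℝ) < 5) (q' + 1)]
  -- final assembly
  have hp0 : p ≠ 0 := by omega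
  have hsgp : sg p = (Multiset.map (fun w => w ^ p) W).sum := by
    simp only [hsg, if_neg hp0]
  have hpip : pi p = ∑ j, z j ^ p := by
    simp only [hpi, if_neg hp0]
  have hceq : ((m + 1 : ℕ) : ℂ) - 1 = (m : ℂ) := by push_cast; ring
  have hmne : (m : ℂ) ≠ 0 := Nat.cast_ne_zero.mpr (by omega)
  have hEeq : (((m + 1 : ℕ) : ℂ) - 1)⁻¹ * (Multiset.map (fun w => w ^ p) W).sum
      - ((m + 1 : ℕ) : ℂ)⁻¹ * ∑ j, z j ^ p
      = (m : ℂ)⁻¹ * (sg p - pi p) + (m : ℂ)⁻¹ * ((m + 1 : ℕ) : ℂ)⁻¹ * pi p := by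
    rw [hceq, ← hsgp, ← hpip]
    have h1 : ((m + 1 : ℕ) : ℂ) = (m : ℂ) + 1 := by push_cast; ring
    have hm1c : ((m : ℂ) + 1) ≠ 0 := by
      rw [← h1]; exact hm1
    rw [h1]
    field_simp
    ring
  rw [hEeq]
  have e1 : ‖(m : ℂ)⁻¹ * (sg p - pi p)‖ ≤ (m:ℝ)⁻¹ * 5 ^ p := by
    rw [norm_mul, norm_inv, Complex.norm_natCast]
    exact mul_le_mul_of_nonneg_left (hdel p) (by positivity)
  have e2 : ‖(m : ℂ)⁻¹ * ((m + 1 : ℕ) : ℂ)⁻¹ * pi p‖ ≤ (m:ℝ)⁻¹ := by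
    rw [norm_mul, norm_mul, norm_inv, norm_inv, Complex.norm_natCast, Complex.norm_natCast]
    have hb := hpibound p
    have hm1R : (0:ℝ) < ((m + 1 : ℕ):ℝ) := by positivity
    have hmR : (0:ℝ) < (m:ℝ) := by
      have : (1:ℝ) ≤ (m:ℝ) := by exact_mod_cast hm
      linarith
    have hcast : ((m + 1 : ℕ) : ℝ) = (m : ℝ) + 1 := by push_cast; ring
    calc (m:ℝ)⁻¹ * ((m + 1 : ℕ):ℝ)⁻¹ * ‖pi p‖
        ≤ (m:ℝ)⁻¹ * ((m + 1 : ℕ):ℝ)⁻¹ * ((m:ℝ) + 1) := by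
          have hnn : (0:ℝ) ≤ (m:ℝ)⁻¹ * ((m + 1 : ℕ):ℝ)⁻¹ := by positivity
          exact mul_le_mul_of_nonneg_left hb hnn
      _ = (m:ℝ)⁻¹ := by
          rw [hcast]
          field_simp
  refine le_trans (le_trans (norm_add_le _ _) (add_le_add e1 e2)) ?_
  have hmR : (1:ℝ) ≤ (m:ℝ) := by exact_mod_cast hm
  have hmpos : (0:ℝ) < (m:ℝ) := by linarith
  have h5 : (0:ℝ) < 5 ^ p := by positivity
  have hL : (m:ℝ)⁻¹ * 5 ^ p + (m:ℝ)⁻¹ = ((5:ℝ) ^ p + 1) / (m:ℝ) := by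
    field_simp
  rw [hL]
  have hcast2 : ((m + 1 : ℕ) : ℝ) = (m : ℝ) + 1 := by push_cast; ring
  rw [hcast2, div_le_div_iff₀ hmpos (by linarith)]
  nlinarith

end Statement9Aux
end

section
/- Fix 0 < q < 1 and 0 < ε₀ < 1 − q. For n ≥ k+1 let Eₙ ⊂ Ω be the event that both: at least ⌊qn⌋ of the points Z₁(ω), …, Zₙ(ω) satisfy min_{1≤i≤n−k} |W_{n,i}(ω) − Z_j(ω)| < ε₀, and at least ⌊q(n−k)⌋ of the points W_{n,1}(ω), …, W_{n,n−k}(ω) satisfy min_{1≤j≤n} |Z_j(ω) − W_{n,i}(ω)| < ε₀. If almost surely μ_{S,n} converges weakly to μ_S as n → ∞, then ℙ(Eₙ holds for all sufficiently large n) = 1. -/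
open MeasureTheory Filter
open Topology

/-- The empirical (probability) measure of the points `w 0, …, w (N-1)` of `ℂ`. -/
noncomputable def empirical (N : ℕ) (w : ℕ → ℂ) : Measure ℂ :=
  (N : ENNReal)⁻¹ • ∑ j ∈ Finset.range N, MeasureTheory.Measure.dirac (w j)

/-- Weak convergence of a sequence of measures on `ℂ` towards `μ`, tested against
bounded continuous real-valued functions. -/
def WeaklyConvergesTo (m : ℕ → Measure ℂ) (μ : Measure ℂ) : Prop :=
  ∀ f : BoundedContinuousFunction ℂ ℝ,
    Tendsto (fun n => ∫ x, f x ∂(m n)) atTop (nhds (∫ x, f x ∂μ))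

lemma empirical_integral (N : ℕ) (w : ℕ → ℂ) (f : BoundedContinuousFunction ℂ ℝ) :
    ∫ x, f x ∂(empirical N w) = (N : ℝ)⁻¹ * ∑ j ∈ Finset.range N, f (w j) := by
  rw [empirical, integral_smul_measure, integral_finset_sum_measure]
  · simp [integral_dirac, ENNReal.toReal_inv]
  · intro i _; exact f.integrable _

section
open ProbabilityTheory
open Classical in
lemma slln_card {Ω : Type*} [MeasurableSpace Ω] (P : Measure Ω) [IsProbabilityMeasure P]
    (μS : Measure ℂ) (Z : ℕ → Ω → ℂ) (hZmeas : ∀ i, Measurable (Z i))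
    (hZlaw : ∀ i, Measure.map (Z i) P = μS)
    (hZindep : ProbabilityTheory.iIndepFun Z P)
    (A : Set ℂ) (hA : MeasurableSet A) :
    ∀ᵐ ω ∂P, Tendsto (fun n : ℕ =>
        (((Finset.range n).filter (fun j => Z j ω ∈ A)).card : ℝ) / n) atTop
      (𝓝 (μS A).toReal) := by
  classical
  set g : ℂ → ℝ := A.indicator (fun _ => 1) with hg
  have hgmeas : Measurable g := measurable_const.indicator hA
  set X : ℕ → Ω → ℝ := fun i ω => g (Z i ω) with hX
  have hbd : ∀ i ω, ‖X i ω‖ ≤ 1 := by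
    intro i ω
    by_cases h : Z i ω ∈ A <;> simp [X, g, Set.indicator_apply, h]
  have hint : Integrable (X 0) P := by
    refine (integrable_const (1:ℝ)).mono'
      ((hgmeas.comp (hZmeas 0)).aestronglyMeasurable) ?_
    filter_upwards with ω using hbd 0 ω
  have hindep : Pairwise (Function.onFun (ProbabilityTheory.IndepFun · · P) X) :=
    fun i j hij => (hZindep.indepFun hij).comp hgmeas hgmeas
  have hident : ∀ i, ProbabilityTheory.IdentDistrib (X i) (X 0) P P :=
    fun i => ProbabilityTheory.IdentDistrib.comp
      ⟨(hZmeas i).aemeasurable, (hZmeas 0).aemeasurable, by rw [hZlaw i, hZlaw 0]⟩ hgmeas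
  have hexp : (∫ ω, X 0 ω ∂P) = (μS A).toReal := by
    have h1 : (∫ ω, X 0 ω ∂P) = ∫ x, g x ∂(Measure.map (Z 0) P) :=
      (integral_map (hZmeas 0).aemeasurable hgmeas.aestronglyMeasurable).symm
    rw [h1, hZlaw 0, hg, integral_indicator_const (1:ℝ) hA, smul_eq_mul, mul_one, measureReal_def]
  have h2 := ProbabilityTheory.strong_law_ae_real X hint hindep hident
  rw [show P[X 0] = (μS A).toReal from hexp] at h2
  filter_upwards [h2] with ω hω
  convert hω using 2 with n
  rw [eq_comm]
  have : ∀ i, X i ω = if Z i ω ∈ A then (1:ℝ) else 0 := by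
    intro i; simp [X, g, Set.indicator_apply]
  simp only [this]
  rw [Finset.sum_boole]

end


open Classical in
/-- Let `S ⊆ ℂ` be closed, `μ_S(S) = 1`, `Z₁, Z₂, …` i.i.d. with law
`μ_S`, and `W_{n,1}, …, W_{n,n-k}` random points with empirical measures `μ_{S,n}`.
Fix `0 < q < 1` and `0 < ε₀ < 1 - q`.  If a.s. `μ_{S,n}` converges weakly to `μ_S`,
then almost surely, eventually in `n`: at least `⌊qn⌋` of `Z₁, …, Zₙ` are within `ε₀`
of some `W_{n,i}`, and at least `⌊q(n-k)⌋` of `W_{n,1}, …, W_{n,n-k}` are within `ε₀`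
of some `Z_j`. -/
theorem statement10
    {Ω : Type*} [MeasurableSpace Ω] (ℙ : Measure Ω) [IsProbabilityMeasure ℙ]
    (S : Set ℂ) (hS : IsClosed S)
    (μS : Measure ℂ) [IsProbabilityMeasure μS] (hμS : μS S = 1)
    (Z : ℕ → Ω → ℂ) (hZmeas : ∀ i, Measurable (Z i))
    (hZlaw : ∀ i, Measure.map (Z i) ℙ = μS)
    (hZindep : ProbabilityTheory.iIndepFun Z ℙ)
    (k : ℕ) (hk : 1 ≤ k)
    (W : ℕ → ℕ → Ω → ℂ) (hWmeas : ∀ n j, Measurable (W n j))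
    (q ε₀ : ℝ) (hq0 : 0 < q) (hq1 : q < 1) (hε0 : 0 < ε₀) (hε1 : ε₀ < 1 - q)
    (hconv : ∀ᵐ ω ∂ℙ,
      WeaklyConvergesTo (fun n => empirical (n - k) (fun j => W n j ω)) μS) :
    ∀ᵐ ω ∂ℙ, ∀ᶠ n : ℕ in atTop,
      (⌊q * (n : ℝ)⌋₊ ≤
          ((Finset.range n).filter
            (fun j => ∃ i < n - k, ‖W n i ω - Z j ω‖ < ε₀)).card
      ∧ ⌊q * ((n - k : ℕ) : ℝ)⌋₊ ≤
          ((Finset.range (n - k)).filter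
            (fun i => ∃ j < n, ‖Z j ω - W n i ω‖ < ε₀)).card) := by
  classical
  set q' : ℝ := (1 + q) / 2 with hq'def
  have hq'q : q < q' := by rw [hq'def]; linarith
  have hq'1 : q' < 1 := by rw [hq'def]; linarith
  have hq'0 : 0 < q' := lt_trans hq0 hq'q
  -- find a big closed ball of measure > q'
  obtain ⟨R, hR⟩ : ∃ R : ℕ, ENNReal.ofReal q' < μS (Metric.closedBall (0:ℂ) R) := by
    have hmono : Monotone (fun R : ℕ => Metric.closedBall (0:ℂ) R) := by
      intro a b hab
      exact Metric.closedBall_subset_closedBall (by exact_mod_cast hab)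
    have hun : (⋃ R : ℕ, Metric.closedBall (0:ℂ) R) = Set.univ := by
      apply Set.eq_univ_of_forall
      intro x
      refine Set.mem_iUnion.2 ⟨⌈‖x‖⌉₊, ?_⟩
      simp only [Metric.mem_closedBall, dist_zero_right]
      exact Nat.le_ceil _
    have ht := MeasureTheory.tendsto_measure_iUnion_atTop (μ := μS) hmono
    rw [hun, measure_univ] at ht
    have hlt : ENNReal.ofReal q' < 1 := by
      rw [← ENNReal.ofReal_one]
      exact ENNReal.ofReal_lt_ofReal_iff_of_nonneg (le_of_lt hq'0) |>.2 hq'1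
    exact (ht.eventually (eventually_gt_nhds hlt)).exists
  set K : Set ℂ := Metric.closedBall (0:ℂ) R with hKdef
  have hKc : IsCompact K := isCompact_closedBall _ _
  -- finite subcover by balls of radius ε₀/4
  obtain ⟨T, hTK, hTcov⟩ := hKc.elim_nhds_subcover (fun x => Metric.ball x (ε₀/4))
    (fun x _ => Metric.ball_mem_nhds x (by positivity))
  set T' : Finset ℂ := T.filter (fun x => μS (Metric.closedBall x (ε₀/4)) ≠ 0) with hT'def
  set C : Set ℂ := ⋃ x ∈ T', Metric.closedBall x (ε₀/4) with hCdef
  set U' : Set ℂ := ⋃ x ∈ T', Metric.ball x (ε₀/2) with hU'def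
  have hCU : C ⊆ U' := by
    refine Set.iUnion₂_mono fun x _ => ?_
    exact Metric.closedBall_subset_ball (by linarith)
  have hCclosed : IsClosed C :=
    Set.Finite.isClosed_biUnion T'.finite_toSet (fun x _ => Metric.isClosed_closedBall)
  have hCcomp : IsCompact C :=
    Set.Finite.isCompact_biUnion T'.finite_toSet (fun x _ => isCompact_closedBall _ _)
  have hU'open : IsOpen U' := isOpen_biUnion (fun x _ => Metric.isOpen_ball)
  -- μS C is big
  have hKC : μS K ≤ μS C := by
    have hdiff : μS (K \ C) = 0 := by
      have hsub : K \ C ⊆ ⋃ x ∈ (T.filter (fun x => μS (Metric.closedBall x (ε₀/4)) = 0)),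
          Metric.closedBall x (ε₀/4) := by
        rintro y ⟨hyK, hyC⟩
        obtain ⟨x, hxmem, hyx⟩ := Set.mem_iUnion₂.1 (hTcov hyK)
        have hyxcb : y ∈ Metric.closedBall x (ε₀/4) := Metric.ball_subset_closedBall hyx
        by_cases hx0 : μS (Metric.closedBall x (ε₀/4)) = 0
        · exact Set.mem_iUnion₂.2 ⟨x, Finset.mem_filter.2 ⟨hxmem, hx0⟩, hyxcb⟩
        · exact absurd (Set.mem_iUnion₂.2 ⟨x, Finset.mem_filter.2 ⟨hxmem, hx0⟩, hyxcb⟩) hyC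
      refine measure_mono_null hsub ?_
      refine (measure_biUnion_null_iff (Finset.countable_toSet _)).2 ?_
      intro x hx
      exact (Finset.mem_filter.1 hx).2
    calc μS K ≤ μS (K ∩ C) + μS (K \ C) := measure_le_inter_add_diff _ _ _
    _ = μS (K ∩ C) := by rw [hdiff, add_zero]
    _ ≤ μS C := measure_mono Set.inter_subset_right
  have hC : q' < (μS C).toReal := by
    have := lt_of_lt_of_le hR hKC
    exact (ENNReal.ofReal_lt_iff_lt_toReal (le_of_lt hq'0) (measure_ne_top _ _)).1 this
  -- Urysohn function for (C, U'ᶜ)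
  obtain ⟨f, hf1, hf0, -, hf01⟩ := exists_continuous_one_zero_of_isCompact hCcomp
    hU'open.isClosed_compl (Set.disjoint_compl_right_iff_subset.2 hCU)
  set F : BoundedContinuousFunction ℂ ℝ :=
    BoundedContinuousFunction.ofNormedAddCommGroup f f.continuous 1
      (fun x => by
        rw [Real.norm_eq_abs, abs_le]
        exact ⟨by linarith [(hf01 x).1], (hf01 x).2⟩) with hFdef
  have hFx : ∀ x, F x = f x := fun x => rfl
  have hFint : q' < ∫ x, F x ∂μS := by
    refine lt_of_lt_of_le hC ?_
    have h1 : ∫ x, C.indicator (fun _ => (1:ℝ)) x ∂μS = (μS C).toReal := by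
      rw [integral_indicator_const (1:ℝ) hCclosed.measurableSet, smul_eq_mul, mul_one, measureReal_def]
    rw [← h1]
    refine integral_mono ((integrable_const (1:ℝ)).indicator hCclosed.measurableSet)
      (F.integrable μS) ?_
    intro x
    by_cases hx : x ∈ C
    · rw [Set.indicator_of_mem hx, hFx]
      have := hf1 hx
      simp only [Pi.one_apply] at this
      exact this.ge
    · rw [Set.indicator_of_notMem hx, hFx]
      exact (hf01 x).1
  -- a.e. events
  have hsllnC := slln_card ℙ μS Z hZmeas hZlaw hZindep C hCclosed.measurableSet
  have hsllnB : ∀ᵐ ω ∂ℙ, ∀ x ∈ (T' : Set ℂ), Tendsto (fun n : ℕ =>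
      (((Finset.range n).filter (fun j => Z j ω ∈ Metric.closedBall x (ε₀/4))).card : ℝ) / n)
      atTop (𝓝 (μS (Metric.closedBall x (ε₀/4))).toReal) := by
    rw [ae_ball_iff T'.countable_toSet]
    intro x _
    exact slln_card ℙ μS Z hZmeas hZlaw hZindep _ Metric.isClosed_closedBall.measurableSet
  filter_upwards [hconv, hsllnC, hsllnB] with ω hcv hC_t hB_t
  -- eventual events
  have hE1 : ∀ᶠ n : ℕ in atTop, q * (n:ℝ) ≤
      (((Finset.range n).filter (fun j => Z j ω ∈ C)).card : ℝ) := by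
    have h := hC_t.eventually (eventually_gt_nhds (lt_trans hq'q hC))
    filter_upwards [h, eventually_ge_atTop 1] with n hn hn1
    have hnpos : (0:ℝ) < n := by exact_mod_cast hn1
    exact le_of_lt ((lt_div_iff₀ hnpos).1 hn)
  have hE2 : ∀ x ∈ (T' : Set ℂ), ∀ᶠ n : ℕ in atTop,
      ∃ j < n, Z j ω ∈ Metric.closedBall x (ε₀/4) := by
    intro x hx
    have hxf : μS (Metric.closedBall x (ε₀/4)) ≠ 0 := (Finset.mem_filter.1 hx).2
    have hpos : 0 < (μS (Metric.closedBall x (ε₀/4))).toReal :=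
      ENNReal.toReal_pos hxf (measure_ne_top _ _)
    have h := (hB_t x hx).eventually (eventually_gt_nhds hpos)
    filter_upwards [h] with n hn
    have hcard : ((Finset.range n).filter
        (fun j => Z j ω ∈ Metric.closedBall x (ε₀/4))).Nonempty := by
      rw [Finset.nonempty_iff_ne_empty]
      intro hempty
      rw [hempty] at hn
      simp at hn
    obtain ⟨j, hj⟩ := hcard
    rw [Finset.mem_filter, Finset.mem_range] at hj
    exact ⟨j, hj.1, hj.2⟩
  have hE3 : ∀ᶠ n : ℕ in atTop, q * ((n - k : ℕ) : ℝ) ≤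
      (((Finset.range (n-k)).filter (fun i => W n i ω ∈ U')).card : ℝ) := by
    have h := (hcv F).eventually (eventually_gt_nhds (lt_trans hq'q hFint))
    filter_upwards [h] with n hn
    rw [empirical_integral] at hn
    rcases Nat.eq_zero_or_pos (n - k) with hN | hN
    · rw [hN] at hn
      simp only [Finset.range_zero, Finset.sum_empty, mul_zero] at hn
      linarith
    · have hNpos : (0:ℝ) < ((n - k : ℕ) : ℝ) := by exact_mod_cast hN
      have hsum : (∑ i ∈ Finset.range (n-k), F (W n i ω)) ≤
          (((Finset.range (n-k)).filter (fun i => W n i ω ∈ U')).card : ℝ) := by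
        rw [← Finset.sum_boole]
        refine Finset.sum_le_sum fun i _ => ?_
        by_cases hw : W n i ω ∈ U'
        · rw [if_pos hw, hFx]; exact (hf01 _).2
        · rw [if_neg hw, hFx]
          have := hf0 (Set.mem_compl hw)
          simp only [Pi.zero_apply] at this
          exact this.le
      have h2 : q < ((n-k:ℕ):ℝ)⁻¹ * (((Finset.range (n-k)).filter
          (fun i => W n i ω ∈ U')).card : ℝ) := by
        refine lt_of_lt_of_le hn ?_
        exact mul_le_mul_of_nonneg_left hsum (by positivity)
      rw [inv_mul_eq_div] at h2
      exact le_of_lt ((lt_div_iff₀ hNpos).1 h2)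
  have hE4 : ∀ x ∈ (T' : Set ℂ), ∀ᶠ n : ℕ in atTop,
      ∃ i < n - k, W n i ω ∈ Metric.ball x (ε₀/2) := by
    intro x hx
    obtain ⟨g, hg1, hg0, -, hg01⟩ := exists_continuous_one_zero_of_isCompact
      (isCompact_closedBall x (ε₀/4)) Metric.isOpen_ball.isClosed_compl
      (Set.disjoint_compl_right_iff_subset.2 (Metric.closedBall_subset_ball (show ε₀/4 < ε₀/2 by linarith)))
    set G : BoundedContinuousFunction ℂ ℝ :=
      BoundedContinuousFunction.ofNormedAddCommGroup g g.continuous 1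
        (fun y => by
          rw [Real.norm_eq_abs, abs_le]
          exact ⟨by linarith [(hg01 y).1], (hg01 y).2⟩) with hGdef
    have hGy : ∀ y, G y = g y := fun y => rfl
    have hxf : μS (Metric.closedBall x (ε₀/4)) ≠ 0 := (Finset.mem_filter.1 hx).2
    have hpos : 0 < (μS (Metric.closedBall x (ε₀/4))).toReal :=
      ENNReal.toReal_pos hxf (measure_ne_top _ _)
    have hGint : 0 < ∫ y, G y ∂μS := by
      refine lt_of_lt_of_le hpos ?_
      have h1 : ∫ y, (Metric.closedBall x (ε₀/4)).indicator (fun _ => (1:ℝ)) y ∂μS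
          = (μS (Metric.closedBall x (ε₀/4))).toReal := by
        rw [integral_indicator_const (1:ℝ) Metric.isClosed_closedBall.measurableSet,
          smul_eq_mul, mul_one, measureReal_def]
      rw [← h1]
      refine integral_mono ((integrable_const (1:ℝ)).indicator
        Metric.isClosed_closedBall.measurableSet) (G.integrable μS) ?_
      intro y
      by_cases hy : y ∈ Metric.closedBall x (ε₀/4)
      · rw [Set.indicator_of_mem hy, hGy]
        have := hg1 hy
        simp only [Pi.one_apply] at this
        exact this.ge
      · rw [Set.indicator_of_notMem hy, hGy]
        exact (hg01 y).1
    have h := (hcv G).eventually (eventually_gt_nhds hGint)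
    filter_upwards [h] with n hn
    rw [empirical_integral] at hn
    by_contra hcon
    push_neg at hcon
    have hzero : (∑ i ∈ Finset.range (n-k), G (W n i ω)) = 0 := by
      refine Finset.sum_eq_zero fun i hi => ?_
      rw [hGy]
      have := hg0 (Set.mem_compl (hcon i (Finset.mem_range.1 hi)))
      simpa using this
    rw [hzero, mul_zero] at hn
    exact lt_irrefl 0 hn
  have hE2' := (eventually_all_finite T'.finite_toSet).2 hE2
  have hE4' := (eventually_all_finite T'.finite_toSet).2 hE4
  filter_upwards [hE1, hE2', hE3, hE4'] with n h1 h2 h3 h4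
  constructor
  · have hsub : (Finset.range n).filter (fun j => Z j ω ∈ C) ⊆
        (Finset.range n).filter
          (fun j => ∃ i < n - k, ‖W n i ω - Z j ω‖ < ε₀) := by
      intro j hj
      rw [Finset.mem_filter] at hj ⊢
      refine ⟨hj.1, ?_⟩
      obtain ⟨x, hxT, hjx⟩ := Set.mem_iUnion₂.1 hj.2
      obtain ⟨i, hik, hiW⟩ := h4 x hxT
      refine ⟨i, hik, ?_⟩
      rw [← Complex.dist_eq]
      calc dist (W n i ω) (Z j ω) ≤ dist (W n i ω) x + dist x (Z j ω) := dist_triangle _ _ _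
      _ < ε₀/2 + ε₀/4 := by
          refine add_lt_add_of_lt_of_le (Metric.mem_ball.1 hiW) ?_
          rw [dist_comm]
          exact Metric.mem_closedBall.1 hjx
      _ < ε₀ := by linarith
    refine le_trans ?_ (Finset.card_le_card hsub)
    have := Nat.floor_le_floor h1
    simpa using this
  · have hsub : (Finset.range (n-k)).filter (fun i => W n i ω ∈ U') ⊆
        (Finset.range (n-k)).filter
          (fun i => ∃ j < n, ‖Z j ω - W n i ω‖ < ε₀) := by
      intro i hi
      rw [Finset.mem_filter] at hi ⊢
      refine ⟨hi.1, ?_⟩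
      obtain ⟨x, hxT, hix⟩ := Set.mem_iUnion₂.1 hi.2
      obtain ⟨j, hjn, hjZ⟩ := h2 x hxT
      refine ⟨j, hjn, ?_⟩
      rw [← Complex.dist_eq]
      calc dist (Z j ω) (W n i ω) ≤ dist (Z j ω) x + dist x (W n i ω) := dist_triangle _ _ _
      _ < ε₀/4 + ε₀/2 := by
          refine add_lt_add_of_le_of_lt (Metric.mem_closedBall.1 hjZ) ?_
          rw [dist_comm]
          exact Metric.mem_ball.1 hix
      _ < ε₀ := by linarith
    refine le_trans ?_ (Finset.card_le_card hsub)
    have := Nat.floor_le_floor h3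
    simpa using this
end
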